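/- Let G be a finite simple undirected graph with positive real edge weights, let x ≠ y be vertices of G, and let P₁ and P₂ be simple paths from x to y such that the edge of P₁ incident to y is different from the edge of P₂ incident to y. Then G contains a simple cycle passing through y, all of whose edges belong to the union of the edge sets of P₁ and P₂, of weight at most w(P₁) + w(P₂). -/

import Mathlib

namespace Stmt7

/-- The weight of a walk: the sum of the weights of its edges. -/
def walkWt {V : Type*} {G : SimpleGraph V} (w : Sym2 V → ℝ) {x y : V} (p : G.Walk x y) : ℝ :=
  (p.edges.map w).sum

/-- The penultimate vertex of a walk (the predecessor of the final endpoint). -/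
def penult {V : Type*} {G : SimpleGraph V} {x y : V} (p : G.Walk x y) : V :=
  p.getVert (p.length - 1)

open SimpleGraph Walk

/-- Find the first vertex of a path that lies in a set `S`, given the endpoint is in `S`. -/
lemma find_first {V : Type*} {G : SimpleGraph V} {a x : V} (p : G.Walk a x) (hp : p.IsPath)
    (S : Set V) (hx : x ∈ S) :
    ∃ z, z ∈ S ∧ ∃ q : G.Walk a z, q.IsPath ∧ (∀ e ∈ q.edges, e ∈ p.edges) ∧
      (∀ v ∈ q.support, v ∈ p.support) ∧ (∀ v ∈ q.support, v ∈ S → v = z) := by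
  induction p with
  | nil =>
    refine ⟨_, hx, Walk.nil, IsPath.nil, ?_, ?_, ?_⟩ <;> simp
  | @cons u b x h p ih =>
    by_cases hu : u ∈ S
    · exact ⟨u, hu, Walk.nil, IsPath.nil, by simp, by simp, fun v hv _ => by simpa using hv⟩
    · obtain ⟨z, hz, q, hq, hqe, hqs, hqlast⟩ := ih (hp.of_cons) hx
      refine ⟨z, hz, Walk.cons h q, ?_, ?_, ?_, ?_⟩
      · rw [Walk.cons_isPath_iff]
        refine ⟨hq, fun hmem => ?_⟩
        exact ((Walk.cons_isPath_iff _ _).mp hp).2 (hqs u hmem)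
      · intro e he
        rw [Walk.edges_cons] at he ⊢
        rcases List.mem_cons.mp he with h' | h'
        · exact List.mem_cons.mpr (Or.inl h')
        · exact List.mem_cons.mpr (Or.inr (hqe e h'))
      · intro v hv
        rw [Walk.support_cons] at hv ⊢
        rcases List.mem_cons.mp hv with h' | h'
        · exact List.mem_cons.mpr (Or.inl h')
        · exact List.mem_cons.mpr (Or.inr (hqs v h'))
      · intro v hv hvS
        rw [Walk.support_cons, List.mem_cons] at hv
        rcases hv with h' | h'
        · exact absurd (h' ▸ hvS) hu
        · exact hqlast v h' hvS

/-- In a path starting at `y`, any edge containing `y` is the first edge. -/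
lemma edge_start {V : Type*} {G : SimpleGraph V} {y x : V} (p : G.Walk y x) (hp : p.IsPath)
    (e : Sym2 V) (he : e ∈ p.edges) (hy : y ∈ e) : e = s(y, p.getVert 1) := by
  cases p with
  | nil => simp at he
  | @cons u b x h p =>
    rw [Walk.edges_cons, List.mem_cons] at he
    rcases he with h' | h'
    · subst h'; simp [Walk.getVert]
    · exfalso
      induction e using Sym2.inductionOn with
      | hf c d =>
        rcases Sym2.mem_iff.mp hy with rfl | rfl
        · exact ((Walk.cons_isPath_iff _ _).mp hp).2 (Walk.fst_mem_support_of_mem_edges p h')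
        · exact ((Walk.cons_isPath_iff _ _).mp hp).2 (Walk.snd_mem_support_of_mem_edges p h')

theorem stmt7 {V : Type*} [Fintype V] (G : SimpleGraph V) (w : Sym2 V → ℝ)
    (hw : ∀ e ∈ G.edgeSet, 0 < w e)
    (x y : V) (hxy : x ≠ y)
    (P₁ P₂ : G.Walk x y) (h₁ : P₁.IsPath) (h₂ : P₂.IsPath)
    (hlast : s(penult P₁, y) ≠ s(penult P₂, y)) :
    ∃ D : G.Walk y y, D.IsCycle ∧
      (∀ e ∈ D.edges, e ∈ P₁.edges ∨ e ∈ P₂.edges) ∧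
      walkWt w D ≤ walkWt w P₁ + walkWt w P₂ := by
  classical
  -- decompose P₁.reverse
  have hnn : ¬ P₁.reverse.Nil := by
    rw [Walk.not_nil_iff_lt_length, Walk.length_reverse]
    rcases Nat.eq_zero_or_pos P₁.length with h0 | h0
    · exact absurd (P₁.eq_of_length_eq_zero h0) hxy
    · exact h0
  obtain ⟨b, hadj, p', hcons⟩ := Walk.not_nil_iff.mp hnn
  have hconsPath : (Walk.cons hadj p').IsPath := hcons ▸ h₁.reverse
  have hp'path : p'.IsPath := hconsPath.of_cons
  have hy_not : y ∉ p'.support := ((Walk.cons_isPath_iff _ _).mp hconsPath).2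
  have hb : b = penult P₁ := by
    have h1 := Walk.getVert_reverse P₁ 1
    rw [hcons, Walk.getVert_cons_succ (n := 0), Walk.getVert_zero] at h1
    exact h1
  -- find first vertex of p' on P₂
  obtain ⟨z, hzS, q, hq, hqe, hqs, hqlast⟩ :=
    find_first p' hp'path {v | v ∈ P₂.support} P₂.start_mem_support
  have hzmem : z ∈ P₂.support := hzS
  set r := P₂.dropUntil z hzmem with hrdef
  have hr : r.IsPath := h₂.dropUntil hzmem
  have hrsub : r.support ⊆ P₂.support := Walk.support_dropUntil_subset _ _
  have hre : r.edges ⊆ P₂.edges := Walk.edges_dropUntil_subset _ _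
  set R := q.append r with hRdef
  have hz_not_tail : z ∉ r.support.tail := by
    have h2 : (z :: r.support.tail).Nodup := by
      rw [← Walk.support_eq_cons r]; exact hr.support_nodup
    exact (List.nodup_cons.mp h2).1
  have hRpath : R.IsPath := by
    rw [Walk.isPath_def, hRdef, Walk.support_append, List.nodup_append]
    refine ⟨hq.support_nodup, hr.support_nodup.tail, ?_⟩
    intro v hv v' hv' hvv'
    subst hvv'
    have hvz : v = z := hqlast v hv (hrsub (List.mem_of_mem_tail hv'))
    exact hz_not_tail (hvz ▸ hv')
  -- the putative first edge
  have hfst_not_q : s(y, b) ∉ q.edges := by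
    intro hmem
    exact hy_not (p'.fst_mem_support_of_mem_edges (hqe _ hmem))
  have hfst_not_P₂ : s(y, b) ∉ P₂.edges := by
    intro hmem
    have hye : y ∈ (s(y, b) : Sym2 V) := Sym2.mem_mk_left _ _
    have hrevmem : s(y, b) ∈ P₂.reverse.edges := by
      rw [Walk.edges_reverse, List.mem_reverse]; exact hmem
    have := edge_start P₂.reverse h₂.reverse _ hrevmem hye
    rw [Walk.getVert_reverse] at this
    apply hlast
    rw [Sym2.eq_swap, ← hb, this, Sym2.eq_swap]
    rfl
  have hD : (Walk.cons hadj R).IsCycle := by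
    rw [Walk.cons_isCycle_iff]
    refine ⟨hRpath, ?_⟩
    rw [hRdef, Walk.edges_append, List.mem_append]
    rintro (h' | h')
    · exact hfst_not_q h'
    · exact hfst_not_P₂ (hre h')
  refine ⟨Walk.cons hadj R, hD, ?_, ?_⟩
  · intro e he
    rw [Walk.edges_cons, List.mem_cons] at he
    rcases he with rfl | he
    · left
      have : s(y, b) ∈ P₁.reverse.edges := by rw [hcons]; simp
      rwa [Walk.edges_reverse, List.mem_reverse] at this
    · rw [hRdef, Walk.edges_append, List.mem_append] at he
      rcases he with h' | h'
      · left
        have : e ∈ P₁.reverse.edges := by rw [hcons, Walk.edges_cons]; exact List.mem_cons_of_mem _ (hqe _ h')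
        rwa [Walk.edges_reverse, List.mem_reverse] at this
      · exact Or.inr (hre h')
  · -- weight bound
    set D := Walk.cons hadj R with hDdef
    have hsub : ∀ e ∈ D.edges, e ∈ P₁.edges ∨ e ∈ P₂.edges := by
      intro e he
      rw [hDdef, Walk.edges_cons, List.mem_cons] at he
      rcases he with rfl | he
      · left
        have : s(y, b) ∈ P₁.reverse.edges := by rw [hcons]; simp
        rwa [Walk.edges_reverse, List.mem_reverse] at this
      · rw [hRdef, Walk.edges_append, List.mem_append] at he
        rcases he with h' | h'
        · left
          have : e ∈ P₁.reverse.edges := by rw [hcons, Walk.edges_cons]; exact List.mem_cons_of_mem _ (hqe _ h')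
          rwa [Walk.edges_reverse, List.mem_reverse] at this
        · exact Or.inr (hre h')
    have hnodup : D.edges.Nodup := hD.isTrail.edges_nodup
    have hle : (↑D.edges : Multiset (Sym2 V)) ≤ ↑P₁.edges + ↑P₂.edges := by
      rw [Multiset.le_iff_count]
      intro e
      by_cases he : e ∈ D.edges
      · have h1 : Multiset.count e (↑D.edges : Multiset (Sym2 V)) ≤ 1 :=
          (Multiset.nodup_iff_count_le_one.mp (by exact hnodup)) e
        have h2 : 1 ≤ Multiset.count e (↑P₁.edges + ↑P₂.edges : Multiset (Sym2 V)) := by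
          rw [Multiset.count_add]
          rcases hsub e he with h' | h'
          · have := Multiset.count_pos.mpr (by exact_mod_cast h' : e ∈ (↑P₁.edges : Multiset (Sym2 V)))
            omega
          · have := Multiset.count_pos.mpr (by exact_mod_cast h' : e ∈ (↑P₂.edges : Multiset (Sym2 V)))
            omega
        exact le_trans h1 h2
      · have : Multiset.count e (↑D.edges : Multiset (Sym2 V)) = 0 :=
          Multiset.count_eq_zero.mpr (by exact_mod_cast he)
        omega
    obtain ⟨u, hu⟩ := Multiset.le_iff_exists_add.mp hle
    have hsum : ((↑P₁.edges + ↑P₂.edges : Multiset (Sym2 V)).map w).sum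
        = ((↑D.edges : Multiset (Sym2 V)).map w).sum + (u.map w).sum := by
      rw [hu, Multiset.map_add, Multiset.sum_add]
    have hP : ((↑P₁.edges + ↑P₂.edges : Multiset (Sym2 V)).map w).sum
        = walkWt w P₁ + walkWt w P₂ := by
      rw [Multiset.map_add, Multiset.sum_add]
      rfl
    have hDw : ((↑D.edges : Multiset (Sym2 V)).map w).sum = walkWt w D := rfl
    have hunn : 0 ≤ (u.map w).sum := by
      apply Multiset.sum_nonneg
      intro a ha
      rw [Multiset.mem_map] at ha
      obtain ⟨e, he, rfl⟩ := ha
      have : e ∈ (↑P₁.edges + ↑P₂.edges : Multiset (Sym2 V)) := by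
        rw [hu]; exact Multiset.mem_add.mpr (Or.inr he)
      rw [Multiset.mem_add] at this
      have heG : e ∈ G.edgeSet := by
        rcases this with h' | h'
        · exact P₁.edges_subset_edgeSet (by exact_mod_cast h')
        · exact P₂.edges_subset_edgeSet (by exact_mod_cast h')
      exact le_of_lt (hw e heG)
    rw [← hDw, ← hP] at *
    rw [hsum]
    linarith

end Stmt7
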